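/- Let 𝒳 = {X_1, …, X_t} be a finite set of events in a probability space with a negative dependency graph D = (𝒳, E). For each i ∈ [t] let ℛ_i be the family of all subsets R of the closed neighbourhood Γ_D*(X_i) such that R is an independent set in D (no two elements of R are adjacent in D). If there are positive real numbers μ_1, …, μ_t such that P(X_i) ≤ μ_i / (Σ_{R∈ℛ_i} ∏_{X_j∈R} μ_j) for all i ∈ [t], then P(⋂_{i∈[t]} X_iᶜ) > 0. -/

import Mathlib

open MeasureTheory

/-- `D` is a negative dependency graph for the events `X i` with respect to `μ`. -/
def IsNegDepGraph {Ω : Type*} [MeasurableSpace Ω] (μ : Measure Ω) {t : ℕ}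
    (X : Fin t → Set Ω) (D : SimpleGraph (Fin t)) : Prop :=
  ∀ (i : Fin t) (Z : Finset (Fin t)), (∀ j ∈ Z, j ≠ i ∧ ¬ D.Adj i j) →
    μ (X i ∩ ⋂ j ∈ Z, (X j)ᶜ) ≤ μ (X i) * μ (⋂ j ∈ Z, (X j)ᶜ)

namespace CELLaux

open Finset

variable {t : ℕ} (D : SimpleGraph (Fin t)) [DecidableRel D.Adj] (w : Fin t → ℝ)

def Z (A : Finset (Fin t)) : ℝ :=
  ∑ R ∈ A.powerset.filter (fun R => ∀ a ∈ R, ∀ b ∈ R, ¬ D.Adj a b), ∏ j ∈ R, w j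

def Nb (i : Fin t) : Finset (Fin t) := insert i (D.neighborFinset i)

lemma prodw_pos (hw : ∀ i, 0 < w i) (R : Finset (Fin t)) : 0 < ∏ j ∈ R, w j :=
  Finset.prod_pos (fun j _ => hw j)

variable (hw : ∀ i, 0 < w i)

include hw in
lemma one_le_Z (A : Finset (Fin t)) : 1 ≤ Z D w A := by
  have h : (∅ : Finset (Fin t)) ∈ A.powerset.filter
      (fun R => ∀ a ∈ R, ∀ b ∈ R, ¬ D.Adj a b) := by simp
  calc (1:ℝ) = ∏ j ∈ (∅ : Finset (Fin t)), w j := by simp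
  _ ≤ Z D w A :=
    Finset.single_le_sum (f := fun R => ∏ j ∈ R, w j)
      (fun R _ => (prodw_pos w hw R).le) h

include hw in
lemma Z_pos (A : Finset (Fin t)) : 0 < Z D w A :=
  lt_of_lt_of_le one_pos (one_le_Z D w hw A)

include hw in
lemma Z_mono {A B : Finset (Fin t)} (h : A ⊆ B) : Z D w A ≤ Z D w B := by
  apply Finset.sum_le_sum_of_subset_of_nonneg
  · exact Finset.filter_subset_filter _ (Finset.powerset_mono.mpr h)
  · exact fun R _ _ => (prodw_pos w hw R).le

include hw in
lemma Z_pair {j : Fin t} {A : Finset (Fin t)} (hj : j ∈ A) : 1 + w j ≤ Z D w A := by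
  have hsub : ({∅, {j}} : Finset (Finset (Fin t))) ⊆ A.powerset.filter
      (fun R => ∀ a ∈ R, ∀ b ∈ R, ¬ D.Adj a b) := by
    intro R hR
    rcases Finset.mem_insert.mp hR with rfl | hR
    · simp
    · rw [Finset.mem_singleton] at hR; subst hR
      simp only [Finset.mem_filter, Finset.mem_powerset, Finset.singleton_subset_iff]
      refine ⟨hj, ?_⟩
      intro a ha b hb
      rw [Finset.mem_singleton] at ha hb; subst ha; subst hb
      exact D.irrefl
  have hval : ∑ R ∈ ({∅, {j}} : Finset (Finset (Fin t))), ∏ k ∈ R, w k = 1 + w j := by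
    rw [Finset.sum_pair (Ne.symm (Finset.singleton_ne_empty j))]
    simp
  rw [← hval]
  exact Finset.sum_le_sum_of_subset_of_nonneg hsub (fun R _ _ => (prodw_pos w hw R).le)

include hw in
lemma Z_submult (A B : Finset (Fin t)) : Z D w A ≤ Z D w (A ∩ B) * Z D w (A \ B) := by
  classical
  have hsplit : ∀ R : Finset (Fin t), (R ∩ B) ∪ (R \ B) = R := by
    intro R; ext x; simp only [mem_union, mem_inter, mem_sdiff]; tauto
  have key : Z D w A = ∑ p ∈ (A.powerset.filter
        (fun R => ∀ a ∈ R, ∀ b ∈ R, ¬ D.Adj a b)).image (fun R => (R ∩ B, R \ B)),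
      (∏ j ∈ p.1, w j) * (∏ j ∈ p.2, w j) := by
    rw [Z, Finset.sum_image ?inj]
    case inj =>
      intro R _ R' _ h
      have h1 : R ∩ B = R' ∩ B := congrArg Prod.fst h
      have h2 : R \ B = R' \ B := congrArg Prod.snd h
      rw [← hsplit R, ← hsplit R', h1, h2]
    apply Finset.sum_congr rfl
    intro R _
    rw [← Finset.prod_union (Finset.disjoint_left.mpr
      (fun x hx hx' => (mem_sdiff.mp hx').2 (mem_inter.mp hx).2)), hsplit R]
  rw [key, Z, Z, Finset.sum_mul_sum, ← Finset.sum_product']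
  apply Finset.sum_le_sum_of_subset_of_nonneg
  · intro p hp
    obtain ⟨R, hR, rfl⟩ := Finset.mem_image.mp hp
    rw [Finset.mem_filter, Finset.mem_powerset] at hR
    obtain ⟨hRA, hRind⟩ := hR
    rw [Finset.mem_product]
    constructor
    · rw [Finset.mem_filter, Finset.mem_powerset]
      exact ⟨Finset.inter_subset_inter_right hRA, fun a ha b hb =>
        hRind a (mem_inter.mp ha).1 b (mem_inter.mp hb).1⟩
    · rw [Finset.mem_filter, Finset.mem_powerset]
      exact ⟨Finset.sdiff_subset_sdiff hRA (Finset.Subset.refl B), fun a ha b hb =>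
        hRind a (mem_sdiff.mp ha).1 b (mem_sdiff.mp hb).1⟩
  · intro p _ _
    exact le_of_lt (mul_pos (prodw_pos w hw _) (prodw_pos w hw _))

include hw in
lemma Z_rec_ge {j : Fin t} {A : Finset (Fin t)} (hj : j ∈ A) :
    Z D w (A.erase j) + w j * Z D w (A \ Nb D j) ≤ Z D w A := by
  classical
  set F := A.powerset.filter (fun R => ∀ a ∈ R, ∀ b ∈ R, ¬ D.Adj a b) with hF
  have hsplit : ∑ R ∈ F.filter (fun R => j ∈ R), ∏ k ∈ R, w k
      + ∑ R ∈ F.filter (fun R => j ∉ R), ∏ k ∈ R, w k = Z D w A := by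
    rw [Z, Finset.sum_filter_add_sum_filter_not]
  have hout : F.filter (fun R => j ∉ R) = (A.erase j).powerset.filter
      (fun R => ∀ a ∈ R, ∀ b ∈ R, ¬ D.Adj a b) := by
    ext R
    simp only [hF, Finset.mem_filter, Finset.mem_powerset, Finset.subset_erase]
    tauto
  have hin : w j * Z D w (A \ Nb D j) ≤ ∑ R ∈ F.filter (fun R => j ∈ R), ∏ k ∈ R, w k := by
    have hjnot : ∀ R' : Finset (Fin t), R' ⊆ A \ Nb D j → j ∉ R' := by
      intro R' hR' hjR'
      exact (mem_sdiff.mp (hR' hjR')).2 (Finset.mem_insert_self j _)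
    have heq : w j * Z D w (A \ Nb D j) = ∑ R ∈ ((A \ Nb D j).powerset.filter
        (fun R => ∀ a ∈ R, ∀ b ∈ R, ¬ D.Adj a b)).image (fun R => insert j R),
        ∏ k ∈ R, w k := by
      rw [Finset.sum_image ?inj2, Z, Finset.mul_sum]
      case inj2 =>
        intro R hR R' hR' h
        rw [Finset.mem_coe, Finset.mem_filter, Finset.mem_powerset] at hR hR'
        rw [← Finset.erase_insert (hjnot R hR.1), ← Finset.erase_insert (hjnot R' hR'.1), show insert j R = insert j R' from h]
      apply Finset.sum_congr rfl
      intro R hR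
      rw [Finset.mem_filter, Finset.mem_powerset] at hR
      rw [Finset.prod_insert (hjnot R hR.1)]
    rw [heq]
    apply Finset.sum_le_sum_of_subset_of_nonneg
    · intro R hR
      obtain ⟨R', hR', rfl⟩ := Finset.mem_image.mp hR
      rw [Finset.mem_filter, Finset.mem_powerset] at hR'
      obtain ⟨hR'A, hR'ind⟩ := hR'
      have hnotadj : ∀ a ∈ R', ¬ D.Adj j a := by
        intro a ha hadj
        exact (mem_sdiff.mp (hR'A ha)).2 (Finset.mem_insert_of_mem
          ((D.mem_neighborFinset j a).mpr hadj))
      rw [Finset.mem_filter, hF, Finset.mem_filter, Finset.mem_powerset]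
      refine ⟨⟨Finset.insert_subset hj (fun x hx => (mem_sdiff.mp (hR'A hx)).1), ?_⟩,
        Finset.mem_insert_self j R'⟩
      intro a ha b hb
      rcases Finset.mem_insert.mp ha with ha | ha <;>
        rcases Finset.mem_insert.mp hb with hb | hb
      · rw [ha, hb]; exact D.irrefl
      · rw [ha]; exact hnotadj b hb
      · rw [hb]; exact fun h => hnotadj a ha h.symm
      · exact hR'ind a ha b hb
    · intro R _ _
      exact (prodw_pos w hw R).le
  calc Z D w (A.erase j) + w j * Z D w (A \ Nb D j)
      ≤ ∑ R ∈ F.filter (fun R => j ∉ R), ∏ k ∈ R, w k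
        + ∑ R ∈ F.filter (fun R => j ∈ R), ∏ k ∈ R, w k := by
        rw [Z, ← hout]; linarith
  _ = Z D w A := by rw [← hsplit]; ring

lemma decomp {Ω : Type*} [MeasurableSpace Ω] (μ : Measure Ω) [IsProbabilityMeasure μ]
    (X : Fin t → Set Ω) (hmeas : ∀ i, MeasurableSet (X i))
    (i : Fin t) (S : Finset (Fin t)) :
    (μ (⋂ j ∈ S, (X j)ᶜ)).toReal =
      (μ (X i ∩ ⋂ j ∈ S, (X j)ᶜ)).toReal + (μ (⋂ j ∈ insert i S, (X j)ᶜ)).toReal := by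
  have h1 : (⋂ j ∈ insert i S, (X j)ᶜ) = (⋂ j ∈ S, (X j)ᶜ) \ X i := by
    rw [Finset.set_biInter_insert, Set.diff_eq, Set.inter_comm]
  have h2 : X i ∩ (⋂ j ∈ S, (X j)ᶜ) = (⋂ j ∈ S, (X j)ᶜ) ∩ X i := Set.inter_comm _ _
  rw [h1, h2, ← ENNReal.toReal_add (measure_ne_top μ _) (measure_ne_top μ _),
    measure_inter_add_diff _ (hmeas i)]

include hw in
lemma key {Ω : Type*} [MeasurableSpace Ω] (μ : Measure Ω) [IsProbabilityMeasure μ]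
    (X : Fin t → Set Ω) (hmeas : ∀ i, MeasurableSet (X i))
    (hD : IsNegDepGraph μ X D) (hP' : ∀ i, (μ (X i)).toReal ≤ w i / Z D w (Nb D i)) :
    ∀ n (S : Finset (Fin t)), S.card ≤ n →
      0 < (μ (⋂ j ∈ S, (X j)ᶜ)).toReal ∧
      ∀ i ∉ S, (μ (X i ∩ ⋂ j ∈ S, (X j)ᶜ)).toReal ≤
        w i / Z D w (Nb D i \ S) * (μ (⋂ j ∈ S, (X j)ᶜ)).toReal := by
  intro n
  induction n with
  | zero =>
    intro S hS
    have hS0 : S = ∅ := Finset.card_eq_zero.mp (Nat.le_zero.mp hS)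
    subst hS0
    have hB : (⋂ j ∈ (∅ : Finset (Fin t)), (X j)ᶜ) = Set.univ := by simp
    constructor
    · rw [hB]; simp
    · intro i _
      rw [hB, Set.inter_univ, Finset.sdiff_empty]
      calc (μ (X i)).toReal ≤ w i / Z D w (Nb D i) := hP' i
      _ = w i / Z D w (Nb D i) * (μ (Set.univ : Set Ω)).toReal := by simp
  | succ n ih =>
    intro S hS
    rcases Nat.lt_or_ge S.card (n+1) with hlt | hge
    · exact ih S (Nat.lt_succ_iff.mp hlt)
    have hcard : S.card = n + 1 := le_antisymm hS hge
    constructor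
    · -- positivity
      have hne : S.Nonempty := Finset.card_pos.mp (by omega)
      obtain ⟨j, hj⟩ := hne
      have hcard' : (S.erase j).card ≤ n := by
        rw [Finset.card_erase_of_mem hj]; omega
      obtain ⟨hpos', hbd'⟩ := ih (S.erase j) hcard'
      have hjS' : j ∉ S.erase j := Finset.notMem_erase j S
      have hb := hbd' j hjS'
      have hdec := decomp μ X hmeas j (S.erase j)
      rw [Finset.insert_erase hj] at hdec
      have hZ := Z_pair D w hw (A := Nb D j \ S.erase j)
        (Finset.mem_sdiff.mpr ⟨Finset.mem_insert_self j _, hjS'⟩)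
      have hZpos := Z_pos D w hw (Nb D j \ S.erase j)
      have hr1 : w j / Z D w (Nb D j \ S.erase j) < 1 := by
        rw [div_lt_one hZpos]; linarith
      nlinarith [mul_pos hpos' (sub_pos.mpr hr1)]
    · -- the conditional bound
      intro i hiS
      set S₂ := S \ D.neighborFinset i with hS₂
      set S₁ := S ∩ D.neighborFinset i with hS₁
      have hS₂S : S₂ ⊆ S := Finset.sdiff_subset
      have hmonoB : (⋂ j ∈ S, (X j)ᶜ) ⊆ ⋂ j ∈ S₂, (X j)ᶜ := by
        intro x hx
        simp only [Set.mem_iInter] at hx ⊢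
        exact fun j hj => hx j (hS₂S hj)
      have inner : ∀ T : Finset (Fin t), T ⊆ S₁ →
          (μ (⋂ j ∈ S₂, (X j)ᶜ)).toReal * Z D w (Nb D i \ (S₂ ∪ T)) ≤
          (μ (⋂ j ∈ S₂ ∪ T, (X j)ᶜ)).toReal * Z D w (Nb D i \ S₂) := by
        intro T
        induction T using Finset.induction_on with
        | empty => intro _; rw [Finset.union_empty]
        | @insert j T hjT ihT =>
          intro hsub
          have hjS₁ : j ∈ S₁ := hsub (Finset.mem_insert_self j T)
          have hTS₁ : T ⊆ S₁ := fun x hx => hsub (Finset.mem_insert_of_mem hx)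
          have hjnb : j ∈ D.neighborFinset i := (Finset.mem_inter.mp hjS₁).2
          have hjS : j ∈ S := (Finset.mem_inter.mp hjS₁).1
          have hjT' : j ∉ S₂ ∪ T := by
            rw [Finset.mem_union]
            rintro (h | h)
            · exact (Finset.mem_sdiff.mp h).2 hjnb
            · exact hjT h
          have hT'S : S₂ ∪ T ⊆ S :=
            Finset.union_subset hS₂S (hTS₁.trans Finset.inter_subset_left)
          have hT'card : (S₂ ∪ T).card ≤ n := by
            have hsub' : S₂ ∪ T ⊆ S.erase j := by
              intro x hx; rw [Finset.mem_erase]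
              exact ⟨fun h => hjT' (h ▸ hx), hT'S hx⟩
            calc (S₂ ∪ T).card ≤ (S.erase j).card := Finset.card_le_card hsub'
            _ = n := by rw [Finset.card_erase_of_mem hjS, hcard]; omega
          obtain ⟨hT'pos, hT'bd⟩ := ih (S₂ ∪ T) hT'card
          have hb := hT'bd j hjT'
          have hdec := decomp μ X hmeas j (S₂ ∪ T)
          have hZjpos := Z_pos D w hw (Nb D j \ (S₂ ∪ T))
          have hjNbT' : j ∈ Nb D j \ (S₂ ∪ T) :=
            Finset.mem_sdiff.mpr ⟨Finset.mem_insert_self _ _, hjT'⟩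
          have hr1 : w j / Z D w (Nb D j \ (S₂ ∪ T)) ≤ 1 := by
            rw [div_le_one hZjpos]
            have := Z_pair D w hw hjNbT'; linarith
          have hrpos : 0 ≤ w j / Z D w (Nb D j \ (S₂ ∪ T)) :=
            div_nonneg (hw j).le hZjpos.le
          have hstep : (μ (⋂ k ∈ S₂ ∪ T, (X k)ᶜ)).toReal *
              (1 - w j / Z D w (Nb D j \ (S₂ ∪ T))) ≤
              (μ (⋂ k ∈ insert j (S₂ ∪ T), (X k)ᶜ)).toReal := by
            nlinarith [hb, hdec]
          -- combinatorial step
          have hjA : j ∈ Nb D i \ (S₂ ∪ T) :=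
            Finset.mem_sdiff.mpr ⟨Finset.mem_insert_of_mem hjnb, hjT'⟩
          have hAe : Nb D i \ (insert j (S₂ ∪ T)) = (Nb D i \ (S₂ ∪ T)).erase j := by
            ext x
            simp only [Finset.mem_sdiff, Finset.mem_erase, Finset.mem_insert]
            tauto
          have hsub2 : (Nb D i \ (S₂ ∪ T)) ∩ Nb D j ⊆ Nb D j \ (S₂ ∪ T) := by
            intro x hx
            rw [Finset.mem_inter, Finset.mem_sdiff] at hx
            exact Finset.mem_sdiff.mpr ⟨hx.2, hx.1.2⟩
          have h1 : Z D w (Nb D i \ (S₂ ∪ T)) ≤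
              Z D w (Nb D j \ (S₂ ∪ T)) * Z D w ((Nb D i \ (S₂ ∪ T)) \ Nb D j) :=
            le_trans (Z_submult D w hw _ (Nb D j))
              (mul_le_mul_of_nonneg_right (Z_mono D w hw hsub2) (Z_pos D w hw _).le)
          have h2 : Z D w (Nb D i \ (S₂ ∪ T)) * (w j / Z D w (Nb D j \ (S₂ ∪ T))) ≤
              w j * Z D w ((Nb D i \ (S₂ ∪ T)) \ Nb D j) := by
            rw [← mul_div_assoc, div_le_iff₀ hZjpos]
            nlinarith [mul_le_mul_of_nonneg_left h1 (hw j).le]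
          have hrec := Z_rec_ge D w hw hjA
          have hcomb : Z D w (Nb D i \ (insert j (S₂ ∪ T))) ≤
              Z D w (Nb D i \ (S₂ ∪ T)) * (1 - w j / Z D w (Nb D j \ (S₂ ∪ T))) := by
            rw [hAe]; nlinarith [hrec, h2]
          -- chain
          rw [Finset.union_insert]
          have hihT := ihT hTS₁
          nlinarith [mul_le_mul_of_nonneg_left hcomb ENNReal.toReal_nonneg
              (a := (μ (⋂ k ∈ S₂, (X k)ᶜ)).toReal),
            mul_le_mul_of_nonneg_right hihT (sub_nonneg.mpr hr1),
            mul_le_mul_of_nonneg_right hstep (Z_pos D w hw (Nb D i \ S₂)).le]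
      have hS₂T : S₂ ∪ S₁ = S := by
        ext x
        simp only [hS₂, hS₁, Finset.mem_union, Finset.mem_sdiff, Finset.mem_inter]
        tauto
      have hfin := inner S₁ (Finset.Subset.refl S₁)
      rw [hS₂T] at hfin
      have hnum1 : (μ (X i ∩ ⋂ j ∈ S, (X j)ᶜ)).toReal ≤
          (μ (X i ∩ ⋂ j ∈ S₂, (X j)ᶜ)).toReal :=
        ENNReal.toReal_mono (measure_ne_top μ _)
          (measure_mono (Set.inter_subset_inter_right _ hmonoB))
      have hcond : ∀ j ∈ S₂, j ≠ i ∧ ¬ D.Adj i j := by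
        intro j hj
        rw [hS₂, Finset.mem_sdiff] at hj
        exact ⟨fun h => hiS (h ▸ hj.1), fun h => hj.2 ((D.mem_neighborFinset i j).mpr h)⟩
      have hnum2 : (μ (X i ∩ ⋂ j ∈ S₂, (X j)ᶜ)).toReal ≤
          (μ (X i)).toReal * (μ (⋂ j ∈ S₂, (X j)ᶜ)).toReal := by
        rw [← ENNReal.toReal_mul]
        exact ENNReal.toReal_mono
          (ENNReal.mul_ne_top (measure_ne_top μ _) (measure_ne_top μ _)) (hD i S₂ hcond)
      have hZ1pos := Z_pos D w hw (Nb D i)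
      have hZ2pos := Z_pos D w hw (Nb D i \ S)
      have hZ31 : Z D w (Nb D i \ S₂) ≤ Z D w (Nb D i) :=
        Z_mono D w hw Finset.sdiff_subset
      have hfrac : w i / Z D w (Nb D i) * (μ (⋂ j ∈ S₂, (X j)ᶜ)).toReal ≤
          w i / Z D w (Nb D i \ S) * (μ (⋂ j ∈ S, (X j)ᶜ)).toReal := by
        rw [div_mul_eq_mul_div, div_mul_eq_mul_div, div_le_div_iff₀ hZ1pos hZ2pos]
        have h5 : (μ (⋂ j ∈ S, (X j)ᶜ)).toReal * Z D w (Nb D i \ S₂) ≤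
            (μ (⋂ j ∈ S, (X j)ᶜ)).toReal * Z D w (Nb D i) :=
          mul_le_mul_of_nonneg_left hZ31 ENNReal.toReal_nonneg
        nlinarith [mul_le_mul_of_nonneg_left hfin (hw i).le,
          mul_le_mul_of_nonneg_left h5 (hw i).le]
      calc (μ (X i ∩ ⋂ j ∈ S, (X j)ᶜ)).toReal
          ≤ (μ (X i ∩ ⋂ j ∈ S₂, (X j)ᶜ)).toReal := hnum1
      _ ≤ (μ (X i)).toReal * (μ (⋂ j ∈ S₂, (X j)ᶜ)).toReal := hnum2
      _ ≤ w i / Z D w (Nb D i) * (μ (⋂ j ∈ S₂, (X j)ᶜ)).toReal :=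
          mul_le_mul_of_nonneg_right (hP' i) ENNReal.toReal_nonneg
      _ ≤ _ := hfrac

end CELLaux

/-- **Lemma 10(ii)** (Bissacot–Fernández–Procacci–Scoppola, cluster-expansion local lemma):
if there are `w i > 0` with `P(X i) ≤ w i / (Σ_{R ∈ ℛ_i} Π_{j ∈ R} w j)` for all `i`, where
`ℛ_i` is the family of all independent subsets of the closed neighbourhood of `X i` in a
negative dependency graph `D`, then with positive probability no event occurs. -/
theorem cluster_expansion_local_lemma_general
    {Ω : Type*} [MeasurableSpace Ω] (μ : Measure Ω) [IsProbabilityMeasure μ]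
    {t : ℕ} (X : Fin t → Set Ω) (hmeas : ∀ i, MeasurableSet (X i))
    (D : SimpleGraph (Fin t)) [DecidableRel D.Adj]
    (hD : IsNegDepGraph μ X D)
    (w : Fin t → ℝ) (hw : ∀ i, 0 < w i)
    (hP : ∀ i, μ (X i) ≤ ENNReal.ofReal (w i /
      ∑ R ∈ Finset.univ.filter (fun R : Finset (Fin t) =>
          R ⊆ insert i (D.neighborFinset i) ∧ ∀ a ∈ R, ∀ b ∈ R, ¬ D.Adj a b),
        ∏ j ∈ R, w j)) :
    0 < μ (⋂ i, (X i)ᶜ) := by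
  classical
  have hsum : ∀ i : Fin t,
      (∑ R ∈ Finset.univ.filter (fun R : Finset (Fin t) =>
          R ⊆ insert i (D.neighborFinset i) ∧ ∀ a ∈ R, ∀ b ∈ R, ¬ D.Adj a b),
        ∏ j ∈ R, w j) = CELLaux.Z D w (CELLaux.Nb D i) := by
    intro i
    apply Finset.sum_congr _ (fun _ _ => rfl)
    ext R
    simp [CELLaux.Z, CELLaux.Nb, Finset.mem_filter, Finset.mem_powerset]
  have hP' : ∀ i, (μ (X i)).toReal ≤ w i / CELLaux.Z D w (CELLaux.Nb D i) := by
    intro i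
    have h := hP i
    rw [hsum i] at h
    have hnn : 0 ≤ w i / CELLaux.Z D w (CELLaux.Nb D i) :=
      div_nonneg (hw i).le (CELLaux.Z_pos D w hw _).le
    calc (μ (X i)).toReal ≤ (ENNReal.ofReal (w i / CELLaux.Z D w (CELLaux.Nb D i))).toReal :=
        ENNReal.toReal_mono ENNReal.ofReal_ne_top h
    _ = w i / CELLaux.Z D w (CELLaux.Nb D i) := ENNReal.toReal_ofReal hnn
  have hkey := (CELLaux.key D w hw μ X hmeas hD hP'
    (Finset.univ : Finset (Fin t)).card Finset.univ le_rfl).1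
  have heq : (⋂ i, (X i)ᶜ) = ⋂ j ∈ (Finset.univ : Finset (Fin t)), (X j)ᶜ := by
    simp
  rw [heq]
  rcases ENNReal.toReal_pos_iff.mp hkey with ⟨h0, _⟩
  exact h0
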